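/- For every N ≥ 2 there exist an optimum tree T*_N on N vertices and an optimum tree T*_{N−1} on N−1 vertices such that T*_{N−1} is an induced subgraph of T*_N. Equivalently, removing a suitable leaf from an optimum tree on N vertices yields an optimum tree on N−1 vertices. -/

import Mathlib

open SimpleGraph

/-- The data of `G` being `G'` extended by a pendant leaf `v` attached at `f x₀`. -/
structure LeafExt {V V' : Type*} (G : SimpleGraph V) (G' : SimpleGraph V')
    (f : V' → V) (v : V) (x₀ : V') : Prop where
  inj : Function.Injective f
  adj_iff : ∀ a b, G'.Adj a b ↔ G.Adj (f a) (f b)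
  range : ∀ x : V, x ≠ v ↔ ∃ a, f a = x
  hub : ∀ y, G.Adj v y ↔ y = f x₀

namespace LeafExt

variable {V V' : Type*} {G : SimpleGraph V} {G' : SimpleGraph V'}
  {f : V' → V} {v : V} {x₀ : V'} (h : LeafExt G G' f v x₀)

include h

/-- The graph homomorphism `G' →g G`. -/
def hom : G' →g G := ⟨f, fun {a b} hab => (h.adj_iff a b).1 hab⟩

lemma ne_v (a : V') : f a ≠ v := (h.range (f a)).2 ⟨a, rfl⟩

lemma pullback : ∀ {a b : V} (p : G.Walk a b), (∀ x ∈ p.support, x ≠ v) →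
    ∀ {a' b' : V'} (ha : f a' = a) (hb : f b' = b),
    ∃ q : G'.Walk a' b', q.map h.hom = p.copy ha.symm hb.symm := by
  intro a b p
  induction p with
  | nil =>
    intro _ a' b' ha hb
    obtain rfl := h.inj (ha.trans hb.symm)
    subst ha
    exact ⟨.nil, rfl⟩
  | @cons u c b hadj p ih =>
    intro hp a' b' ha hb
    have hc : c ≠ v := hp c (by simp)
    obtain ⟨c', hc'⟩ := (h.range c).1 hc
    have hadj' : G'.Adj a' c' := (h.adj_iff a' c').2 (by rw [ha, hc']; exact hadj)
    obtain ⟨q, hq⟩ := ih (fun x hx => hp x (by simp [hx])) hc' hb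
    refine ⟨.cons hadj' q, ?_⟩
    subst ha; subst hc'; subst hb
    simp only [SimpleGraph.Walk.map_cons, SimpleGraph.Walk.copy_rfl_rfl] at hq ⊢
    rw [hq]
    rfl

lemma avoid : ∀ {a b : V} (p : G.Walk a b), p.IsPath → a ≠ v → b ≠ v →
    ∀ x ∈ p.support, x ≠ v := by
  intro a b p
  induction p with
  | nil =>
    intro _ ha _ x hx
    simp only [SimpleGraph.Walk.support_nil, List.mem_singleton] at hx
    subst hx; exact ha
  | @cons u c b hadj p ih =>
    intro hp ha hb x hx
    have hpath := (SimpleGraph.Walk.cons_isPath_iff hadj p).1 hp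
    have hc : c ≠ v := by
      intro hcv
      subst hcv
      have hu : u = f x₀ := (h.hub u).1 hadj.symm
      cases p with
      | nil => exact hb rfl
      | @cons _ d _ h2 p2 =>
        have hd : d = f x₀ := (h.hub d).1 h2
        refine hpath.2 ?_
        rw [SimpleGraph.Walk.support_cons]
        refine List.mem_cons_of_mem _ ?_
        rw [hu, ← hd]
        exact p2.start_mem_support
    rw [SimpleGraph.Walk.support_cons, List.mem_cons] at hx
    rcases hx with rfl | hx
    · exact ha
    · exact ih hpath.1 hc hb x hx

lemma connected_of (hc : G'.Connected) : G.Connected := by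
  have key : ∀ x : V, G.Reachable x v := by
    intro x
    by_cases hx : x = v
    · subst hx; exact Reachable.refl _
    · obtain ⟨a, rfl⟩ := (h.range x).1 hx
      have h1 : G.Reachable (f a) (f x₀) := Reachable.map h.hom (hc.preconnected a x₀)
      have h2 : G.Adj v (f x₀) := (h.hub (f x₀)).2 rfl
      exact h1.trans h2.symm.reachable
  have : Nonempty V := ⟨v⟩
  exact ⟨fun x y => (key x).trans (key y).symm⟩

lemma connected_to (hc : G.Connected) : G'.Connected := by
  classical
  have : Nonempty V' := ⟨x₀⟩
  refine ⟨fun a b => ?_⟩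
  obtain ⟨w⟩ := hc.preconnected (f a) (f b)
  obtain ⟨q, -⟩ := h.pullback w.bypass
    (h.avoid w.bypass w.bypass_isPath (h.ne_v a) (h.ne_v b)) rfl rfl
  exact ⟨q⟩

lemma acyclic_to (ha : G.IsAcyclic) : G'.IsAcyclic := by
  classical
  intro a c hc
  have hinj : Function.Injective h.hom := h.inj
  exact ha (c.map h.hom) ((SimpleGraph.Walk.map_isCycle_iff_of_injective hinj).2 hc)
lemma path_unique_avoid {a b : V} (ha : a ≠ v) (hb : b ≠ v) (hac : G'.IsAcyclic)
    (p q : G.Walk a b) (hp : p.IsPath) (hq : q.IsPath) : p = q := by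
  obtain ⟨a', rfl⟩ := (h.range a).1 ha
  obtain ⟨b', rfl⟩ := (h.range b).1 hb
  obtain ⟨r, hr⟩ := h.pullback p (h.avoid p hp ha hb) rfl rfl
  obtain ⟨s, hs⟩ := h.pullback q (h.avoid q hq ha hb) rfl rfl
  rw [SimpleGraph.Walk.copy_rfl_rfl] at hr hs
  have hinj : Function.Injective h.hom := h.inj
  have hrp : r.IsPath := by
    rw [← SimpleGraph.Walk.map_isPath_iff_of_injective hinj, hr]; exact hp
  have hsp : s.IsPath := by
    rw [← SimpleGraph.Walk.map_isPath_iff_of_injective hinj, hs]; exact hq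
  have : (⟨r, hrp⟩ : G'.Path a' b') = ⟨s, hsp⟩ := hac.path_unique _ _
  rw [← hr, ← hs, show r = s from Subtype.ext_iff.1 this]

lemma path_unique_from_v {b : V} (hb : b ≠ v) (hac : G'.IsAcyclic)
    (p q : G.Walk v b) (hp : p.IsPath) (hq : q.IsPath) : p = q := by
  have decomp : ∀ (p : G.Walk v b), p.IsPath →
      ∃ (p' : G.Walk (f x₀) b), p = SimpleGraph.Walk.cons ((h.hub (f x₀)).2 rfl) p' ∧ p'.IsPath := by
    intro p hp
    cases p with
    | nil => exact absurd rfl hb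
    | @cons _ d _ h2 p2 =>
      have hd : d = f x₀ := (h.hub d).1 h2
      subst hd
      exact ⟨p2, rfl, ((SimpleGraph.Walk.cons_isPath_iff h2 p2).1 hp).1⟩
  obtain ⟨p', rfl, hp'⟩ := decomp p hp
  obtain ⟨q', rfl, hq'⟩ := decomp q hq
  rw [h.path_unique_avoid (h.ne_v x₀) hb hac p' q' hp' hq']

lemma acyclic_of (hac : G'.IsAcyclic) : G.IsAcyclic := by
  apply SimpleGraph.isAcyclic_of_path_unique
  rintro a b ⟨p, hp⟩ ⟨q, hq⟩
  refine Subtype.ext ?_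
  simp only
  by_cases hab : a = b
  · subst hab
    rw [(SimpleGraph.Walk.isPath_iff_eq_nil (p := p)).1 hp, (SimpleGraph.Walk.isPath_iff_eq_nil (p := q)).1 hq]
  by_cases hav : a = v
  · subst hav
    exact h.path_unique_from_v (fun hbv => hab hbv.symm) hac p q hp hq
  by_cases hbv : b = v
  · subst hbv
    have := h.path_unique_from_v hav hac p.reverse q.reverse hp.reverse hq.reverse
    rw [← p.reverse_reverse, this, q.reverse_reverse]
  · exact h.path_unique_avoid hav hbv hac p q hp hq

lemma isTree_of (ht : G'.IsTree) : G.IsTree :=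
  ⟨h.connected_of ht.isConnected, h.acyclic_of ht.IsAcyclic⟩

lemma isTree_to (ht : G.IsTree) : G'.IsTree :=
  ⟨h.connected_to ht.isConnected, h.acyclic_to ht.IsAcyclic⟩

lemma dist_eq (hc : G'.Connected) (a b : V') : G.dist (f a) (f b) = G'.dist a b := by
  classical
  have hcG : G.Connected := h.connected_of hc
  apply le_antisymm
  · obtain ⟨w, hw⟩ := (hc.preconnected a b).exists_walk_length_eq_dist
    calc G.dist (f a) (f b) ≤ (w.map h.hom).length := SimpleGraph.dist_le _
    _ = G'.dist a b := by rw [SimpleGraph.Walk.length_map, hw]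
  · obtain ⟨w, hw⟩ := (hcG.preconnected (f a) (f b)).exists_walk_length_eq_dist
    obtain ⟨q, hq⟩ := h.pullback w.bypass
      (h.avoid w.bypass w.bypass_isPath (h.ne_v a) (h.ne_v b)) rfl rfl
    rw [SimpleGraph.Walk.copy_rfl_rfl] at hq
    calc G'.dist a b ≤ q.length := SimpleGraph.dist_le _
    _ = w.bypass.length := by rw [← hq]; exact (SimpleGraph.Walk.length_map (f := h.hom) (p := q)).symm
    _ ≤ w.length := SimpleGraph.Walk.length_bypass_le _
    _ = G.dist (f a) (f b) := hw

end LeafExt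
/-- `nstar G h` is the maximum number of vertices of `G` that are pairwise at
graph distance at least `h`. -/
noncomputable def nstar {V : Type*} (G : SimpleGraph V) (h : ℕ) : ℕ :=
  sSup {k | ∃ S : Finset V, S.card = k ∧ ∀ i ∈ S, ∀ j ∈ S, i ≠ j → h ≤ G.dist i j}

section nstar

variable {V : Type*} [Fintype V] (G : SimpleGraph V) (h : ℕ)

omit [Fintype V] in
lemma nstar_set_nonempty :
    {k | ∃ S : Finset V, S.card = k ∧ ∀ i ∈ S, ∀ j ∈ S, i ≠ j → h ≤ G.dist i j}.Nonempty :=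
  ⟨0, ∅, Finset.card_empty, by simp⟩

lemma nstar_set_bddAbove :
    BddAbove {k | ∃ S : Finset V, S.card = k ∧ ∀ i ∈ S, ∀ j ∈ S, i ≠ j → h ≤ G.dist i j} := by
  refine ⟨Fintype.card V, ?_⟩
  rintro k ⟨S, rfl, -⟩
  exact Finset.card_le_univ S

lemma nstar_exists : ∃ S : Finset V, S.card = nstar G h ∧
    ∀ i ∈ S, ∀ j ∈ S, i ≠ j → h ≤ G.dist i j :=
  Nat.sSup_mem (nstar_set_nonempty G h) (nstar_set_bddAbove G h)

lemma le_nstar (S : Finset V) (hS : ∀ i ∈ S, ∀ j ∈ S, i ≠ j → h ≤ G.dist i j) :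
    S.card ≤ nstar G h :=
  le_csSup (nstar_set_bddAbove G h) ⟨S, rfl, hS⟩

lemma nstar_le_card : nstar G h ≤ Fintype.card V := by
  apply csSup_le (nstar_set_nonempty G h)
  rintro k ⟨S, rfl, -⟩
  exact Finset.card_le_univ S

end nstar

namespace LeafExt

variable {V V' : Type*} [Fintype V] [Fintype V'] {G : SimpleGraph V} {G' : SimpleGraph V'}
  {f : V' → V} {v : V} {x₀ : V'} (h : LeafExt G G' f v x₀)

include h

lemma nstar_le (hc : G'.Connected) (hh : ℕ) : nstar G' hh ≤ nstar G hh := by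
  classical
  obtain ⟨S, hcard, hpack⟩ := nstar_exists G' hh
  rw [← hcard, ← Finset.card_image_of_injective S h.inj]
  apply le_nstar
  rintro i hi j hj hij
  obtain ⟨a, ha, rfl⟩ := Finset.mem_image.1 hi
  obtain ⟨b, hb, rfl⟩ := Finset.mem_image.1 hj
  rw [h.dist_eq hc]
  exact hpack a ha b hb (fun e => hij (congrArg f e))

lemma nstar_ge (hc : G'.Connected) (hh : ℕ) : nstar G hh ≤ nstar G' hh + 1 := by
  classical
  obtain ⟨S, hcard, hpack⟩ := nstar_exists G hh
  have hsub : ∀ a ∈ (S.erase v).preimage f h.inj.injOn,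
      ∀ b ∈ (S.erase v).preimage f h.inj.injOn, a ≠ b → hh ≤ G'.dist a b := by
    intro a ha b hb hab
    rw [Finset.mem_preimage] at ha hb
    rw [← h.dist_eq hc]
    exact hpack (f a) (Finset.mem_of_mem_erase ha) (f b) (Finset.mem_of_mem_erase hb)
      (fun e => hab (h.inj e))
  have himg : ((S.erase v).preimage f h.inj.injOn).image f = S.erase v := by
    ext x
    simp only [Finset.mem_image, Finset.mem_preimage]
    constructor
    · rintro ⟨a, ha, rfl⟩; exact ha
    · intro hx
      obtain ⟨a, rfl⟩ := (h.range x).1 (Finset.ne_of_mem_erase hx)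
      exact ⟨a, hx, rfl⟩
  have hcard2 : S.card - 1 ≤ ((S.erase v).preimage f h.inj.injOn).card := by
    calc S.card - 1 ≤ (S.erase v).card := Finset.pred_card_le_card_erase
    _ = _ := by conv_lhs => rw [← himg]
                rw [Finset.card_image_of_injective _ h.inj]
  have := le_trans hcard2 (le_nstar G' hh _ hsub)
  omega

end LeafExt

section AddLeaf

variable {V V' : Type*} (G' : SimpleGraph V') (f : V' → V) (v : V) (x₀ : V')
  (hinj : Function.Injective f) (hrange : ∀ x : V, x ≠ v ↔ ∃ a, f a = x)

/-- Attach a pendant vertex `v` to the copy under `f` of `G'`, at `f x₀`. -/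
def addLeaf : SimpleGraph V where
  Adj a b := (∃ a' b', f a' = a ∧ f b' = b ∧ G'.Adj a' b') ∨
    (a = v ∧ b = f x₀) ∨ (a = f x₀ ∧ b = v)
  symm := by
    refine ⟨?_⟩
    rintro a b (⟨a', b', rfl, rfl, hab⟩ | ⟨rfl, rfl⟩ | ⟨rfl, rfl⟩)
    · exact Or.inl ⟨b', a', rfl, rfl, hab.symm⟩
    · exact Or.inr (Or.inr ⟨rfl, rfl⟩)
    · exact Or.inr (Or.inl ⟨rfl, rfl⟩)
  loopless := by
    have hne : ∀ a, f a ≠ v := fun a ha => ((hrange (f a)).2 ⟨a, rfl⟩) ha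
    refine ⟨?_⟩
    rintro a (⟨a', b', rfl, hb, hab⟩ | ⟨rfl, hb⟩ | ⟨ha, hb⟩)
    · exact hab.ne (hinj hb.symm)
    · exact hne x₀ hb.symm
    · exact hne x₀ (ha ▸ hb)

lemma addLeaf_leafExt : LeafExt (addLeaf G' f v x₀ hinj hrange) G' f v x₀ := by
  have hne : ∀ a, f a ≠ v := fun a ha => ((hrange (f a)).2 ⟨a, rfl⟩) ha
  refine ⟨hinj, ?_, hrange, ?_⟩
  · intro a b
    constructor
    · intro hab
      exact Or.inl ⟨a, b, rfl, rfl, hab⟩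
    · rintro (⟨a', b', ha, hb, hab⟩ | ⟨ha, -⟩ | ⟨-, hb⟩)
      · rwa [hinj ha, hinj hb] at hab
      · exact absurd ha (hne a)
      · exact absurd hb (hne b)
  · intro y
    constructor
    · rintro (⟨a', b', ha, -, -⟩ | ⟨-, rfl⟩ | ⟨ha, -⟩)
      · exact absurd ha (hne a')
      · rfl
      · exact absurd ha.symm (hne x₀)
    · rintro rfl
      exact Or.inr (Or.inl ⟨rfl, rfl⟩)

end AddLeaf
lemma exists_hub {n : ℕ} (hn : 2 ≤ n) (G : SimpleGraph (Fin n)) (hG : G.IsTree) :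
    ∃ v u : Fin n, ∀ y, G.Adj v y ↔ y = u := by
  classical
  have hnt : Nontrivial (Fin n) := Fintype.one_lt_card_iff_nontrivial.1 (by simp; omega)
  have hdeg : ∀ x, 0 < G.degree x := by
    intro x
    obtain ⟨y, hy⟩ := exists_ne x
    obtain ⟨w⟩ := hG.isConnected.preconnected x y
    rw [SimpleGraph.degree_pos_iff_exists_adj]
    cases w with
    | nil => exact absurd rfl hy.symm
    | cons h2 _ => exact ⟨_, h2⟩
  have hone : ∃ v, G.degree v = 1 := by
    by_contra h1
    push_neg at h1
    have h2 : ∀ v, 2 ≤ G.degree v := fun x => by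
      have := hdeg x; have := h1 x; omega
    have hsum := SimpleGraph.sum_degrees_eq_twice_card_edges G
    have hedge := hG.card_edgeFinset
    rw [Fintype.card_fin] at hedge
    have hbig : 2 * n ≤ ∑ x, G.degree x := by
      calc 2 * n = ∑ _x : Fin n, 2 := by simp [Finset.sum_const, Fintype.card_fin, mul_comm]
      _ ≤ ∑ x, G.degree x := Finset.sum_le_sum (fun x _ => h2 x)
    omega
  obtain ⟨v, hv⟩ := hone
  rw [SimpleGraph.degree, Finset.card_eq_one] at hv
  obtain ⟨u, hu⟩ := hv
  refine ⟨v, u, fun y => ?_⟩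
  rw [← SimpleGraph.mem_neighborFinset, hu, Finset.mem_singleton]

lemma exists_fin_tree : ∀ n : ℕ, 1 ≤ n → ∃ G : SimpleGraph (Fin n), G.IsTree := by
  intro n
  induction n with
  | zero => omega
  | succ m ih =>
    intro _
    by_cases hm : m = 0
    · subst hm
      refine ⟨⊥, ⟨⟨fun a b => ?_⟩, ?_⟩⟩
      · have : a = b := Fin.ext (by have := a.2; have := b.2; omega)
        subst this
        exact SimpleGraph.Reachable.refl _
      · intro a c hc
        cases c with
        | nil => exact hc.ne_nil rfl
        | cons h2 _ => exact h2.elim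
    · obtain ⟨G', hG'⟩ := ih (by omega)
      have hinj : Function.Injective (Fin.castLE (by omega : m ≤ m + 1)) :=
        Fin.castLE_injective _
      have hrange : ∀ x : Fin (m + 1), x ≠ Fin.last m ↔
          ∃ a, Fin.castLE (by omega : m ≤ m + 1) a = x := by
        intro x
        constructor
        · intro hx
          have hxm : x.1 ≠ m := fun e => hx (Fin.ext e)
          have hlt : x.1 < m := by have := x.2; omega
          exact ⟨⟨x.1, hlt⟩, Fin.ext rfl⟩
        · rintro ⟨a, rfl⟩
          exact Fin.ne_of_val_ne (by have := a.2; simp; omega)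
      exact ⟨addLeaf G' _ (Fin.last m) ⟨0, by omega⟩ hinj hrange,
        (addLeaf_leafExt G' _ (Fin.last m) ⟨0, by omega⟩ hinj hrange).isTree_of hG'⟩

lemma exists_optimum (n : ℕ) (hn : 1 ≤ n) (h : ℕ) :
    ∃ T : SimpleGraph (Fin n), T.IsTree ∧
      ∀ U : SimpleGraph (Fin n), U.IsTree → nstar U h ≤ nstar T h := by
  obtain ⟨U₀, hU₀⟩ := exists_fin_tree n hn
  have hne : {k | ∃ U : SimpleGraph (Fin n), U.IsTree ∧ nstar U h = k}.Nonempty :=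
    ⟨_, U₀, hU₀, rfl⟩
  have hbdd : BddAbove {k | ∃ U : SimpleGraph (Fin n), U.IsTree ∧ nstar U h = k} := by
    refine ⟨n, ?_⟩
    rintro k ⟨U, hU, rfl⟩
    simpa using nstar_le_card U h
  obtain ⟨T, hT, hTk⟩ := Nat.sSup_mem hne hbdd
  refine ⟨T, hT, fun U hU => ?_⟩
  rw [hTk]
  exact le_csSup hbdd ⟨U, hU, rfl⟩
/-- For every `N ≥ 2` there exist an optimum tree on `N` vertices and an optimum
tree on `N - 1` vertices such that the latter is an induced subgraph of the former. -/
theorem optimum_tree_induced_subgraph (N h : ℕ) (hN : 2 ≤ N) :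
    ∃ (T : SimpleGraph (Fin N)) (T' : SimpleGraph (Fin (N - 1))),
      T.IsTree ∧ T'.IsTree ∧
      (∀ U : SimpleGraph (Fin N), U.IsTree → nstar U h ≤ nstar T h) ∧
      (∀ U : SimpleGraph (Fin (N - 1)), U.IsTree → nstar U h ≤ nstar T' h) ∧
      ∃ f : Fin (N - 1) → Fin N, Function.Injective f ∧
        ∀ a b, T'.Adj a b ↔ T.Adj (f a) (f b) := by
  classical
  obtain ⟨T₀, hT₀t, hT₀opt⟩ := exists_optimum N (by omega) h
  obtain ⟨T₀', hT₀'t, hT₀'opt⟩ := exists_optimum (N - 1) (by omega) h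
  -- the pendant extension of T₀'
  set f : Fin (N - 1) → Fin N := Fin.castLE (by omega : N - 1 ≤ N) with hfdef
  have hinj : Function.Injective f := Fin.castLE_injective _
  set v : Fin N := ⟨N - 1, by omega⟩ with hvdef
  have hrange : ∀ x : Fin N, x ≠ v ↔ ∃ a, f a = x := by
    intro x
    constructor
    · intro hx
      have hxm : x.1 ≠ N - 1 := fun e => hx (Fin.ext e)
      have hlt : x.1 < N - 1 := by have := x.2; omega
      exact ⟨⟨x.1, hlt⟩, Fin.ext rfl⟩
    · rintro ⟨a, rfl⟩
      exact Fin.ne_of_val_ne (by have := a.2; show a.1 ≠ N - 1; omega)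
  set x₀ : Fin (N - 1) := ⟨0, by omega⟩
  set T₁ := addLeaf T₀' f v x₀ hinj hrange with hT₁def
  have hL := addLeaf_leafExt T₀' f v x₀ hinj hrange
  have hT₁t : T₁.IsTree := hL.isTree_of hT₀'t
  have h1 : nstar T₀' h ≤ nstar T₁ h := hL.nstar_le hT₀'t.isConnected h
  by_cases hcmp : nstar T₀ h ≤ nstar T₀' h
  · refine ⟨T₁, T₀', hT₁t, hT₀'t, ?_, hT₀'opt, f, hinj, hL.adj_iff⟩
    intro U hU
    exact le_trans (le_trans (hT₀opt U hU) hcmp) h1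
  · -- delete a leaf from T₀
    obtain ⟨w, u, hub⟩ := exists_hub hN T₀ hT₀t
    have hu_ne : u ≠ w := ((hub u).2 rfl).ne'
    have hcard : Fintype.card (Fin (N - 1)) = Fintype.card {x : Fin N // x ≠ w} := by
      rw [Fintype.card_fin, Fintype.card_subtype_compl, Fintype.card_subtype_eq,
        Fintype.card_fin]
    set e := Fintype.equivOfCardEq hcard with hedef
    set g : Fin (N - 1) → Fin N := fun a => (e a).1 with hgdef
    set T' := T₀.comap g with hT'def
    have hL2 : LeafExt T₀ T' g w (e.symm ⟨u, hu_ne⟩) := by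
      refine ⟨?_, fun a b => Iff.rfl, ?_, ?_⟩
      · intro a b hab
        exact e.injective (Subtype.ext hab)
      · intro x
        constructor
        · intro hx
          exact ⟨e.symm ⟨x, hx⟩, by simp [hgdef]⟩
        · rintro ⟨a, rfl⟩
          exact (e a).2
      · intro y
        rw [hub y]
        constructor
        · rintro rfl
          simp [hgdef]
        · rintro rfl
          simp [hgdef]
    have hT't : T'.IsTree := hL2.isTree_to hT₀t
    refine ⟨T₀, T', hT₀t, hT't, hT₀opt, ?_, g, hL2.inj, hL2.adj_iff⟩
    intro U hU
    have h2 : nstar T₀ h ≤ nstar T' h + 1 := hL2.nstar_ge hT't.isConnected h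
    have h3 := hT₀'opt U hU
    omega
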